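/- Let n ≥ 1 and let A = (a_ij) ∈ ℝ^{n×n}. Then the one-sided limit lim_{δ→0⁺} (‖I + δ·A‖_∞ − 1)/δ exists and equals max_i [a_ii + Σ_{j≠i} |a_ij|]. That is, the logarithmic norm of A induced by the ∞-operator norm is μ_∞(A) = max_i [a_ii + Σ_{j,j≠i} |a_ij|]. -/

import Mathlib

/-! The logarithmic norm of A induced by the ∞-operator norm (maximum absolute row sum):
μ_∞(A) = lim_{δ→0⁺} (‖I + δA‖_∞ − 1)/δ = max_i [a_ii + Σ_{j≠i} |a_ij|]. -/

attribute [local instance] Matrix.linftyOpNormedAddCommGroup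

theorem logNorm_linfty_eq_max_row
    (n : ℕ) (hn : 1 ≤ n) (A : Matrix (Fin n) (Fin n) ℝ) :
    Filter.Tendsto
      (fun δ : ℝ => (‖(1 : Matrix (Fin n) (Fin n) ℝ) + δ • A‖ - 1) / δ)
      (nhdsWithin 0 (Set.Ioi 0))
      (nhds (⨆ i : Fin n, (A i i + ∑ j ∈ Finset.univ.erase i, |A i j|))) := by
  haveI : Nonempty (Fin n) := Fin.pos_iff_nonempty.mp hn
  set c : Fin n → ℝ := fun i => A i i + ∑ j ∈ Finset.univ.erase i, |A i j| with hc
  set B : ℝ := Finset.univ.sup' Finset.univ_nonempty (fun i => |A i i|) with hB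
  have hB0 : 0 ≤ B := by
    rw [hB]
    exact le_trans (abs_nonneg _)
      (Finset.le_sup' (fun i => |A i i|) (Finset.mem_univ (Classical.arbitrary (Fin n))))
  have hε : (0:ℝ) < (B + 1)⁻¹ := by positivity
  apply Filter.Tendsto.congr' _ (tendsto_const_nhds (x := ⨆ i, c i))
  filter_upwards [Ioo_mem_nhdsGT_of_mem ⟨le_refl (0:ℝ), hε⟩] with δ hδ
  obtain ⟨hδ0, hδε⟩ := hδ
  -- each row sum
  have row : ∀ i, ∑ j, ‖((1 : Matrix (Fin n) (Fin n) ℝ) + δ • A) i j‖ = 1 + δ * c i := by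
    intro i
    have h1 : ∀ j, ((1 : Matrix (Fin n) (Fin n) ℝ) + δ • A) i j
        = (if i = j then (1:ℝ) else 0) + δ * A i j := by
      intro j
      simp [Matrix.add_apply, Matrix.one_apply, Matrix.smul_apply]
    have hsplit : ∑ j, ‖((1 : Matrix (Fin n) (Fin n) ℝ) + δ • A) i j‖
        = ‖((1 : Matrix (Fin n) (Fin n) ℝ) + δ • A) i i‖
          + ∑ j ∈ Finset.univ.erase i, ‖((1 : Matrix (Fin n) (Fin n) ℝ) + δ • A) i j‖ :=
      (Finset.add_sum_erase _ _ (Finset.mem_univ i)).symm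
    have hdiag : ‖((1 : Matrix (Fin n) (Fin n) ℝ) + δ • A) i i‖ = 1 + δ * A i i := by
      rw [h1 i, if_pos rfl, Real.norm_eq_abs, abs_of_pos]
      have hBi : |A i i| ≤ B := by
        rw [hB]; exact Finset.le_sup' (fun i => |A i i|) (Finset.mem_univ i)
      have : δ * |A i i| < 1 := by
        have h2 : δ * (B + 1) < (B + 1)⁻¹ * (B + 1) :=
          mul_lt_mul_of_pos_right hδε (by positivity)
        rw [inv_mul_cancel₀ (by positivity : (B:ℝ) + 1 ≠ 0)] at h2
        nlinarith
      nlinarith [neg_abs_le (A i i), abs_nonneg (A i i)]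
    have hoff : ∀ j ∈ Finset.univ.erase i,
        ‖((1 : Matrix (Fin n) (Fin n) ℝ) + δ • A) i j‖ = δ * |A i j| := by
      intro j hj
      have hij : i ≠ j := (Finset.ne_of_mem_erase hj).symm
      rw [h1 j, if_neg hij, zero_add, Real.norm_eq_abs, abs_mul, abs_of_pos hδ0]
    rw [hsplit, hdiag, Finset.sum_congr rfl hoff, ← Finset.mul_sum, hc]
    ring
  -- the norm
  have hnorm : ‖(1 : Matrix (Fin n) (Fin n) ℝ) + δ • A‖ = 1 + δ * ⨆ i, c i := by
    rw [Matrix.linfty_opNorm_def]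
    have hcoe : ((Finset.univ.sup fun i => ∑ j, ‖((1 : Matrix (Fin n) (Fin n) ℝ) + δ • A) i j‖₊ : NNReal) : ℝ)
        = Finset.univ.sup' Finset.univ_nonempty
            (fun i => ∑ j, ‖((1 : Matrix (Fin n) (Fin n) ℝ) + δ • A) i j‖) := by
      rw [← Finset.sup'_eq_sup Finset.univ_nonempty]
      rw [Finset.comp_sup'_eq_sup'_comp Finset.univ_nonempty
        (fun x : NNReal => (x : ℝ)) (fun x y : NNReal => NNReal.coe_max x y)]
      congr 1
      ext i
      simp only [Function.comp_apply, NNReal.coe_sum, coe_nnnorm]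
    rw [hcoe]
    have : Finset.univ.sup' Finset.univ_nonempty
        (fun i => ∑ j, ‖((1 : Matrix (Fin n) (Fin n) ℝ) + δ • A) i j‖)
        = Finset.univ.sup' Finset.univ_nonempty (fun i => 1 + δ * c i) := by
      congr 1; ext i; exact row i
    rw [this, ← Finset.sup'_univ_eq_ciSup]
    have hsup : ∀ x y : ℝ, 1 + δ * (x ⊔ y) = (1 + δ * x) ⊔ (1 + δ * y) := by
      intro x y
      have hm : Monotone (fun x : ℝ => 1 + δ * x) := fun a b h => by
        dsimp only; nlinarith
      exact hm.map_sup x y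
    exact (Finset.comp_sup'_eq_sup'_comp Finset.univ_nonempty
      (fun x => 1 + δ * x) hsup).symm
  rw [hnorm]
  field_simp
  ring
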